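/- Let M be a compact topological space and f : M → ℝ^{k+1} a continuous function. Suppose there exists a continuous map D : ℝ^{k+1}_{0+} → M (where ℝ^{k+1}_{0+} = {t ∈ ℝ^{k+1} : t_0 ≥ 0, t ≠ 0}) such that for every t ∈ ℝ^{k+1}_{0+}, D(t) maximizes x ↦ ⟨t, f(x)⟩ over M. Then the optimal value function V_f(c) = sup { f_0(x) : f_1(x) = c_1, …, f_k(x) = c_k, x ∈ M } (with value −∞ when the feasible set is empty) is concave in c ∈ ℝ^k. -/

import Mathlib

open Filter Topology

open scoped BigOperators

lemma core_min {k : ℕ} (G : (Fin k → ℝ) → (Fin k → ℝ)) (hG : Continuous G)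
    (ψ : (Fin k → ℝ) → ℝ) (hψ : Continuous ψ)
    (hsub : ∀ s p : Fin k → ℝ, ψ p + (∑ i, (s i - p i) * G p i) ≤ ψ s)
    (m : ℝ) (hm : ∀ s, m ≤ ψ s) (ε : ℝ) (hε : 0 < ε) :
    ∃ s : Fin k → ℝ, (∀ i, G s i = -(2 * ε * s i)) ∧
      ε * (∑ i, (s i) ^ 2) ≤ ψ 0 - m := by
  set Q : (Fin k → ℝ) → ℝ := fun s => ∑ i, (s i) ^ 2 with hQdef
  have hQcont : Continuous Q := by
    apply continuous_finset_sum
    intro i _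
    exact (continuous_apply i).pow 2
  have hQnonneg : ∀ s, 0 ≤ Q s := fun s =>
    Finset.sum_nonneg fun i _ => sq_nonneg _
  have hQ0 : Q 0 = 0 := by simp [hQdef]
  set ψε : (Fin k → ℝ) → ℝ := fun s => ψ s + ε * Q s with hψεdef
  have hψεcont : Continuous ψε := hψ.add (continuous_const.mul hQcont)
  set R : ℝ := (ψ 0 - m) / ε + 1 with hRdef
  have hC0 : 0 ≤ ψ 0 - m := by linarith [hm 0]
  have hR0 : 0 < R := by positivity
  set B : Set (Fin k → ℝ) := {s | Q s ≤ R} with hBdef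
  have hBclosed : IsClosed B := isClosed_le hQcont continuous_const
  have hBsub : B ⊆ Set.univ.pi (fun _ : Fin k => Set.Icc (-Real.sqrt R) (Real.sqrt R)) := by
    intro s hs i _
    have h1 : (s i) ^ 2 ≤ R := le_trans
      (Finset.single_le_sum (fun j _ => sq_nonneg (s j)) (Finset.mem_univ i)) hs
    constructor
    · nlinarith [Real.sq_sqrt hR0.le, Real.sqrt_nonneg R]
    · nlinarith [Real.sq_sqrt hR0.le, Real.sqrt_nonneg R]
  have hBcompact : IsCompact B :=
    (isCompact_univ_pi (fun _ => isCompact_Icc)).of_isClosed_subset hBclosed hBsub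
  have h0B : (0 : Fin k → ℝ) ∈ B := by
    simp only [hBdef, Set.mem_setOf_eq, hQ0]; exact hR0.le
  obtain ⟨p, hpB, hpmin⟩ := hBcompact.exists_isMinOn ⟨0, h0B⟩ hψεcont.continuousOn
  -- global minimality
  have hglob : ∀ s, ψε p ≤ ψε s := by
    intro s
    by_cases hs : s ∈ B
    · exact hpmin hs
    · have hQs : R < Q s := by
        simp only [hBdef, Set.mem_setOf_eq, not_le] at hs; exact hs
      have h1 : ψε p ≤ ψε 0 := hpmin h0B
      have h2 : ψε 0 = ψ 0 := by simp [hψεdef, hQ0]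
      have h3 : m + ε * R < ψε s := by
        have := hm s
        have := mul_lt_mul_of_pos_left hQs hε
        simp only [hψεdef]; linarith
      have h4 : m + ε * R = ψ 0 + ε := by
        rw [hRdef, mul_add, mul_div_assoc', mul_comm ε (ψ 0 - m), mul_div_assoc, div_self hε.ne']; ring
      linarith
  have hQp : ε * Q p ≤ ψ 0 - m := by
    have h1 : ψε p ≤ ψε 0 := hglob 0
    have h2 : ψε 0 = ψ 0 := by simp [hψεdef, hQ0]
    have := hm p
    simp only [hψεdef] at h1
    rw [hQ0, mul_zero] at h1
    linarith
  -- first order condition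
  have hfoc : ∀ i, G p i = -(2 * ε * p i) := by
    set v : Fin k → ℝ := fun i => G p i + 2 * ε * p i with hvdef
    have hkey : ∀ w : Fin k → ℝ, (∑ i, w i * v i) ≤ 0 := by
      intro w
      have hineq : ∀ δ : ℝ, 0 < δ →
          (∑ i, w i * (G (fun j => p j - δ * w j) i + 2 * ε * p i)) ≤ ε * δ * Q w := by
        intro δ hδ
        set p' : Fin k → ℝ := fun j => p j - δ * w j with hp'def
        have hsub' := hsub p p'
        -- (∑ i, (p i - p' i) * G p' i) ≤ ψ p - ψ p'
        have h1 : (∑ i, δ * w i * G p' i) ≤ ψ p - ψ p' := by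
          have : ∀ i, (p i - p' i) * G p' i = δ * w i * G p' i := by
            intro i; simp only [hp'def]; ring
          rw [Finset.sum_congr rfl fun i _ => this i] at hsub'
          linarith
        have h2 : ψ p - ψ p' ≤ ε * (Q p' - Q p) := by
          have := hglob p'
          simp only [hψεdef] at this
          linarith
        have h3 : Q p' - Q p = -(2 * δ * ∑ i, p i * w i) + δ ^ 2 * Q w := by
          simp only [hQdef, hp'def]
          rw [← Finset.sum_sub_distrib]
          have hrhs : -(2 * δ * ∑ i, p i * w i) + δ ^ 2 * (∑ i, (w i) ^ 2)
              = ∑ i : Fin k, (-(2 * δ * (p i * w i)) + δ ^ 2 * (w i) ^ 2) := by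
            rw [Finset.sum_add_distrib, Finset.sum_neg_distrib, Finset.mul_sum, Finset.mul_sum]
          rw [hrhs]
          apply Finset.sum_congr rfl
          intro i _
          ring
        -- combine: δ * ∑ w i * G p' i ≤ -2εδ ∑ p w + εδ² Q w
        have h4 : δ * (∑ i, w i * G p' i) ≤
            -(2 * ε * δ * ∑ i, p i * w i) + ε * δ ^ 2 * Q w := by
          have hl : (∑ i, δ * w i * G p' i) = δ * (∑ i, w i * G p' i) := by
            rw [Finset.mul_sum]; apply Finset.sum_congr rfl; intro i _; ring
          rw [hl] at h1
          calc δ * (∑ i, w i * G p' i) ≤ ψ p - ψ p' := h1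
            _ ≤ ε * (Q p' - Q p) := h2
            _ = -(2 * ε * δ * ∑ i, p i * w i) + ε * δ ^ 2 * Q w := by rw [h3]; ring
        have h5 : (∑ i, w i * (G p' i + 2 * ε * p i)) =
            (∑ i, w i * G p' i) + 2 * ε * ∑ i, p i * w i := by
          rw [Finset.mul_sum, ← Finset.sum_add_distrib]
          apply Finset.sum_congr rfl; intro i _; ring
        rw [h5]
        have := mul_le_mul_of_nonneg_left h4 (le_of_lt (inv_pos.mpr hδ))
        rw [← mul_assoc, inv_mul_cancel₀ (ne_of_gt hδ), one_mul] at this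
        nlinarith
      -- take limit δ → 0⁺
      have hL : Filter.Tendsto
          (fun δ : ℝ => (∑ i, w i * (G (fun j => p j - δ * w j) i + 2 * ε * p i)))
          (𝓝[>] (0:ℝ)) (𝓝 (∑ i, w i * v i)) := by
        have hcont : Continuous (fun δ : ℝ =>
            (∑ i, w i * (G (fun j => p j - δ * w j) i + 2 * ε * p i))) := by
          apply continuous_finset_sum
          intro i _
          apply continuous_const.mul
          apply Continuous.add _ continuous_const
          apply (continuous_apply i).comp
          apply hG.comp
          exact continuous_pi fun j => continuous_const.sub (continuous_id.mul continuous_const)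
        have h0 : (∑ i, w i * (G (fun j => p j - (0:ℝ) * w j) i + 2 * ε * p i))
            = ∑ i, w i * v i := by
          apply Finset.sum_congr rfl
          intro i _
          simp [hvdef]
        have := hcont.continuousAt (x := (0:ℝ))
        rw [ContinuousAt, h0] at this
        exact this.mono_left nhdsWithin_le_nhds
      have hR : Filter.Tendsto (fun δ : ℝ => ε * δ * Q w) (𝓝[>] (0:ℝ)) (𝓝 0) := by
        have : Continuous (fun δ : ℝ => ε * δ * Q w) := by continuity
        have h := this.continuousAt (x := (0:ℝ))
        rw [ContinuousAt] at h
        simp only [mul_zero, zero_mul] at h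
        exact h.mono_left nhdsWithin_le_nhds
      exact le_of_tendsto_of_tendsto hL hR
        (Filter.eventually_of_mem self_mem_nhdsWithin fun δ hδ => hineq δ hδ)
    intro i
    have h1 := hkey v
    have h2 : (∑ i, v i * v i) = ∑ i, (v i) ^ 2 :=
      Finset.sum_congr rfl fun j _ => by ring
    rw [h2] at h1
    have h3 : (v i) ^ 2 ≤ 0 :=
      le_trans (Finset.single_le_sum (fun j _ => sq_nonneg (v j)) (Finset.mem_univ i)) h1
    have h4 : v i = 0 := sq_eq_zero_iff.mp (le_antisymm h3 (sq_nonneg _))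
    have h5 : G p i + 2 * ε * p i = 0 := h4
    linarith
  exact ⟨p, hfoc, hQp⟩

theorem stmt_0 {k : ℕ} {M : Type*} [TopologicalSpace M] [CompactSpace M]
    (f : M → Fin (k + 1) → ℝ) (hf : Continuous f)
    (D : {t : Fin (k + 1) → ℝ // 0 ≤ t 0 ∧ t ≠ 0} → M)
    (hD : Continuous D)
    (hmax : ∀ t : {t : Fin (k + 1) → ℝ // 0 ≤ t 0 ∧ t ≠ 0}, ∀ x : M,
      ∑ i, t.1 i * f x i ≤ ∑ i, t.1 i * f (D t) i)
    (V : (Fin k → ℝ) → EReal)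
    (hV : ∀ c, V c = sSup {y : EReal |
      ∃ x : M, (∀ i : Fin k, f x i.succ = c i) ∧ y = ((f x 0 : ℝ) : EReal)}) :
    ∀ (c c' : Fin k → ℝ) (lam : ℝ), 0 ≤ lam → lam ≤ 1 →
      V c ≠ ⊥ → V c' ≠ ⊥ → V c ≠ ⊤ → V c' ≠ ⊤ →
      (lam : EReal) * V c + ((1 - lam : ℝ) : EReal) * V c' ≤
        V (fun i => lam * c i + (1 - lam) * c' i) := by
  intro c c' lam hlam0 hlam1 hVcB hVc'B hVcT hVc'T
  set c'' : Fin k → ℝ := fun i => lam * c i + (1 - lam) * c' i with hc''def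
  -- attainment of the supremum at c and c'
  have hatt : ∀ cc : Fin k → ℝ, V cc ≠ ⊥ →
      ∃ xm : M, (∀ i : Fin k, f xm i.succ = cc i) ∧ V cc ≤ ((f xm 0 : ℝ) : EReal) := by
    intro cc hne
    have hSne : {y : EReal | ∃ x : M, (∀ i : Fin k, f x i.succ = cc i) ∧
        y = ((f x 0 : ℝ) : EReal)}.Nonempty := by
      by_contra h
      rw [Set.not_nonempty_iff_eq_empty] at h
      rw [hV cc, h, sSup_empty] at hne
      exact hne rfl
    obtain ⟨y0, x0, hx0, hy0⟩ := hSne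
    have hFclosed : IsClosed {x : M | ∀ i : Fin k, f x i.succ = cc i} := by
      have he : {x : M | ∀ i : Fin k, f x i.succ = cc i}
          = ⋂ i : Fin k, {x : M | f x i.succ = cc i} := by
        ext x; simp [Set.mem_iInter]
      rw [he]
      exact isClosed_iInter fun i =>
        isClosed_eq ((continuous_apply i.succ).comp hf) continuous_const
    obtain ⟨xm, hxmF, hxmmax⟩ := hFclosed.isCompact.exists_isMaxOn ⟨x0, hx0⟩
      ((continuous_apply (0 : Fin (k+1))).comp hf).continuousOn
    refine ⟨xm, hxmF, ?_⟩
    rw [hV cc]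
    apply sSup_le
    rintro y ⟨x, hx, rfl⟩
    exact EReal.coe_le_coe_iff.mpr (hxmmax hx)
  obtain ⟨xc, hxcF, hxcV⟩ := hatt c hVcB
  obtain ⟨xc', hxc'F, hxc'V⟩ := hatt c' hVc'B
  set m : ℝ := lam * f xc 0 + (1 - lam) * f xc' 0 with hmdef
  have h1ml : (0:ℝ) ≤ 1 - lam := by linarith
  -- the dual vector construction
  have hcons : ∀ s : Fin k → ℝ,
      (0:ℝ) ≤ (Fin.cons 1 s : Fin (k+1) → ℝ) 0 ∧ (Fin.cons 1 s : Fin (k+1) → ℝ) ≠ 0 := by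
    intro s
    refine ⟨by rw [Fin.cons_zero]; norm_num, ?_⟩
    intro h
    have h0 := congrFun h 0
    rw [Fin.cons_zero] at h0
    simpa using h0
  set X : (Fin k → ℝ) → M := fun s => D ⟨Fin.cons 1 s, hcons s⟩ with hXdef
  have hXcont : Continuous X := by
    apply hD.comp
    apply Continuous.subtype_mk
    apply continuous_pi
    intro i
    refine Fin.cases ?_ ?_ i
    · simp only [Fin.cons_zero]; exact continuous_const
    · intro j; simp only [Fin.cons_succ]; exact continuous_apply j
  have key : ∀ (s : Fin k → ℝ) (x : M),
      f x 0 + ∑ i : Fin k, s i * f x i.succ ≤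
        f (X s) 0 + ∑ i : Fin k, s i * f (X s) i.succ := by
    intro s x
    have h := hmax ⟨Fin.cons 1 s, hcons s⟩ x
    simp only [Fin.sum_univ_succ, Fin.cons_zero, Fin.cons_succ, one_mul] at h
    simpa only [hXdef] using h
  set G : (Fin k → ℝ) → (Fin k → ℝ) := fun s i => f (X s) i.succ - c'' i with hGdef
  set ψ : (Fin k → ℝ) → ℝ := fun s => f (X s) 0 + ∑ i : Fin k, s i * G s i with hψdef
  have hGcont : Continuous G := continuous_pi fun i =>
    (((continuous_apply i.succ).comp hf).comp hXcont).sub continuous_const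
  have hψcont : Continuous ψ := by
    apply (((continuous_apply (0 : Fin (k+1))).comp hf).comp hXcont).add
    exact continuous_finset_sum _ fun i _ =>
      (continuous_apply i).mul ((continuous_apply i).comp hGcont)
  have esub : ∀ (q : Fin k → ℝ) (x : M),
      ∑ i : Fin k, q i * (f x i.succ - c'' i)
        = (∑ i : Fin k, q i * f x i.succ) - ∑ i : Fin k, q i * c'' i := by
    intro q x
    rw [← Finset.sum_sub_distrib]
    exact Finset.sum_congr rfl fun i _ => by ring
  have key2 : ∀ s p : Fin k → ℝ,
      f (X p) 0 + ∑ i : Fin k, s i * G p i ≤ f (X s) 0 + ∑ i : Fin k, s i * G s i := by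
    intro s p
    have h := key s (X p)
    simp only [hGdef]
    rw [esub s (X p), esub s (X s)]
    linarith
  have hsub : ∀ s p : Fin k → ℝ, ψ p + (∑ i : Fin k, (s i - p i) * G p i) ≤ ψ s := by
    intro s p
    have e1 : ∑ i : Fin k, (s i - p i) * G p i
        = (∑ i : Fin k, s i * G p i) - ∑ i : Fin k, p i * G p i := by
      rw [← Finset.sum_sub_distrib]
      exact Finset.sum_congr rfl fun i _ => by ring
    have h := key2 s p
    simp only [hψdef]
    linarith
  have hm : ∀ s : Fin k → ℝ, m ≤ ψ s := by
    intro s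
    have h1 := key s xc
    have h2 := key s xc'
    have hc1 : ∑ i : Fin k, s i * f xc i.succ = ∑ i : Fin k, s i * c i :=
      Finset.sum_congr rfl fun i _ => by rw [hxcF i]
    have hc2 : ∑ i : Fin k, s i * f xc' i.succ = ∑ i : Fin k, s i * c' i :=
      Finset.sum_congr rfl fun i _ => by rw [hxc'F i]
    rw [hc1] at h1
    rw [hc2] at h2
    have e3 : ∑ i : Fin k, s i * c'' i
        = lam * (∑ i : Fin k, s i * c i) + (1-lam) * (∑ i : Fin k, s i * c' i) := by
      simp only [hc''def]
      rw [Finset.mul_sum, Finset.mul_sum, ← Finset.sum_add_distrib]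
      exact Finset.sum_congr rfl fun i _ => by ring
    simp only [hψdef, hGdef]
    rw [esub s (X s), e3, hmdef]
    nlinarith [mul_le_mul_of_nonneg_left h1 hlam0, mul_le_mul_of_nonneg_left h2 h1ml]
  set C0 : ℝ := ψ 0 - m with hC0def
  have hC0 : 0 ≤ C0 := by have := hm 0; simp only [hC0def]; linarith
  have main : ∀ n : ℕ, ∃ x : M, m ≤ f x 0 ∧
      ∀ i : Fin k, (f x i.succ - c'' i)^2 ≤ 4 * C0 / ((n:ℝ)+1) := by
    intro n
    have hεpos : (0:ℝ) < 1/((n:ℝ)+1) := by positivity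
    obtain ⟨s, hs1, hs2⟩ := core_min G hGcont ψ hψcont hsub m hm (1/((n:ℝ)+1)) hεpos
    have hQpos : (0:ℝ) ≤ ∑ i : Fin k, (s i)^2 := Finset.sum_nonneg fun i _ => sq_nonneg _
    refine ⟨X s, ?_, ?_⟩
    · have e : ∑ i : Fin k, s i * G s i
          = -(2*(1/((n:ℝ)+1))) * ∑ i : Fin k, (s i)^2 := by
        rw [Finset.mul_sum]
        exact Finset.sum_congr rfl fun i _ => by rw [hs1 i]; ring
      have hψs := hm s
      simp only [hψdef] at hψs
      rw [e] at hψs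
      nlinarith [mul_nonneg hεpos.le hQpos]
    · intro i
      have hGi : f (X s) i.succ - c'' i = G s i := by simp only [hGdef]
      rw [hGi, hs1 i]
      have hsq : (s i)^2 ≤ ∑ j : Fin k, (s j)^2 :=
        Finset.single_le_sum (fun j _ => sq_nonneg (s j)) (Finset.mem_univ i)
      have he : (-(2*(1/((n:ℝ)+1))*s i))^2 = 4*(1/((n:ℝ)+1))*((1/((n:ℝ)+1))*(s i)^2) := by
        ring
      rw [he]
      have h4 : (1/((n:ℝ)+1))*(s i)^2 ≤ C0 := by
        refine le_trans ?_ hs2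
        exact mul_le_mul_of_nonneg_left hsq hεpos.le
      calc 4*(1/((n:ℝ)+1))*((1/((n:ℝ)+1))*(s i)^2)
          ≤ 4*(1/((n:ℝ)+1))*C0 := by
            apply mul_le_mul_of_nonneg_left h4; positivity
        _ = 4 * C0 / ((n:ℝ)+1) := by ring
  choose xs hxs1 hxs2 using main
  set A : ℕ → Set M := fun n =>
    {x : M | m ≤ f x 0} ∩ ⋂ i : Fin k, {x : M | (f x i.succ - c'' i)^2 ≤ 4 * C0 / ((n:ℝ)+1)}
    with hAdef
  have hAclosed : ∀ n, IsClosed (A n) := by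
    intro n
    apply IsClosed.inter
    · exact isClosed_le continuous_const ((continuous_apply (0 : Fin (k+1))).comp hf)
    · exact isClosed_iInter fun i => isClosed_le
        ((((continuous_apply i.succ).comp hf).sub continuous_const).pow 2) continuous_const
  have hAanti : ∀ n, A (n+1) ⊆ A n := by
    intro n x hx
    refine ⟨hx.1, ?_⟩
    rw [Set.mem_iInter]
    intro i
    have h : (f x i.succ - c'' i)^2 ≤ 4 * C0 / (((n+1:ℕ):ℝ)+1) :=
      Set.mem_iInter.mp hx.2 i
    show (f x i.succ - c'' i)^2 ≤ 4 * C0 / ((n:ℝ)+1)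
    have hcast : ((n+1 : ℕ):ℝ) + 1 = (n:ℝ) + 2 := by push_cast; ring
    rw [hcast] at h
    refine le_trans h ?_
    gcongr
    · linarith
  have hAne : ∀ n, (A n).Nonempty := by
    intro n
    refine ⟨xs n, hxs1 n, ?_⟩
    rw [Set.mem_iInter]
    exact hxs2 n
  obtain ⟨xstar, hxstar⟩ := IsCompact.nonempty_iInter_of_sequence_nonempty_isCompact_isClosed
    A hAanti hAne (hAclosed 0).isCompact hAclosed
  rw [Set.mem_iInter] at hxstar
  have hval : m ≤ f xstar 0 := (hxstar 0).1
  have hfeas : ∀ i : Fin k, f xstar i.succ = c'' i := by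
    intro i
    have hsq : ∀ n : ℕ, (f xstar i.succ - c'' i)^2 ≤ 4*C0/((n:ℝ)+1) := fun n =>
      Set.mem_iInter.mp (hxstar n).2 i
    have htend : Tendsto (fun n : ℕ => 4*C0/((n:ℝ)+1)) atTop (𝓝 0) := by
      have h := tendsto_one_div_add_atTop_nhds_zero_nat.const_mul (4*C0)
      rw [mul_zero] at h
      refine h.congr fun n => ?_
      rw [mul_one_div]
    have h0 : (f xstar i.succ - c'' i)^2 ≤ 0 := ge_of_tendsto' htend hsq
    have h1 : f xstar i.succ - c'' i = 0 :=
      sq_eq_zero_iff.mp (le_antisymm h0 (sq_nonneg _))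
    linarith
  have hVc'' : ((m : ℝ) : EReal) ≤ V c'' := by
    rw [hV c'']
    refine le_trans (EReal.coe_le_coe_iff.mpr hval) ?_
    exact le_sSup ⟨xstar, hfeas, rfl⟩
  obtain ⟨a', hva⟩ : ∃ a' : ℝ, V c = ((a' : ℝ) : EReal) :=
    ⟨(V c).toReal, (EReal.coe_toReal hVcT hVcB).symm⟩
  obtain ⟨b', hvb⟩ : ∃ b' : ℝ, V c' = ((b' : ℝ) : EReal) :=
    ⟨(V c').toReal, (EReal.coe_toReal hVc'T hVc'B).symm⟩
  have ha'le : a' ≤ f xc 0 := EReal.coe_le_coe_iff.mp (hva ▸ hxcV)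
  have hb'le : b' ≤ f xc' 0 := EReal.coe_le_coe_iff.mp (hvb ▸ hxc'V)
  calc (lam : EReal) * V c + ((1 - lam : ℝ) : EReal) * V c'
      = ((lam * a' + (1-lam) * b' : ℝ) : EReal) := by
        rw [hva, hvb, ← EReal.coe_mul, ← EReal.coe_mul, ← EReal.coe_add]
    _ ≤ ((m : ℝ) : EReal) := by
        refine EReal.coe_le_coe_iff.mpr ?_
        rw [hmdef]
        have h1 := mul_le_mul_of_nonneg_left ha'le hlam0
        have h2 := mul_le_mul_of_nonneg_left hb'le h1ml
        linarith
    _ ≤ V c'' := hVc''
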